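/- arXiv:1405.6863 — 2 statements merged into one kernel-verified Lean document; each statement's English description precedes it below -/
import Mathlib

section
/- In the two-locus Moran model with generator G, define the carré du champ Γ(f,g)(z) = G(fg)(z) − f(z)·G(g)(z) − g(z)·G(f)(z), and write x_u(z) = z_{u·}/N, y_v(z) = z_{·v}/N, d_{uv}(z) = z_{uv}/N − x_u(z) y_v(z). Then there exists a constant C, depending only on K and L, such that for all N ≥ 1, all z ∈ ℕ^{K×L} with Σ_{ij} z_{ij} = N, all u, k ∈ [K] and all v, l ∈ [L]: (i) |Γ(x_u, x_k)(z) − x_u(z)(δ_{uk} − x_k(z))| ≤ C(1 + θ_A + θ_B + ρ)/N; (ii) |Γ(y_v, y_l)(z) − y_v(z)(δ_{vl} − y_l(z))| ≤ C(1 + θ_A + θ_B + ρ)/N; (iii) |Γ(x_u, y_v)(z) − d_{uv}(z)| ≤ C(1 + θ_A + θ_B + ρ)/N. -/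
open scoped BigOperators

/-- Transition rate of the two-locus Moran model: the rate at which a haplotype
`(i,j)` dies and is replaced by a haplotype `(k,l)` when the configuration is `z`. -/
noncomputable def moranRate (N K L : ℕ) (θA θB ρ : ℝ)
    (PA : Fin K → Fin K → ℝ) (PB : Fin L → Fin L → ℝ)
    (z : Fin K → Fin L → ℕ) (i : Fin K) (j : Fin L) (k : Fin K) (l : Fin L) : ℝ :=
  ((z i j : ℝ) / N) *
    (((N : ℝ) ^ 2 / 2) * ((z k l : ℝ) / N)
      + (N : ℝ) * (θA / 2 * PA i k * (if j = l then 1 else 0)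
          + θB / 2 * PB j l * (if i = k then 1 else 0)
          + ρ / 2 * ((∑ l', (z k l' : ℝ)) / N) * ((∑ k', (z k' l : ℝ)) / N)))

/-- The configuration `z − e_{ij} + e_{kl}`. -/
def moranUpdate {K L : ℕ} (z : Fin K → Fin L → ℕ)
    (i : Fin K) (j : Fin L) (k : Fin K) (l : Fin L) : Fin K → Fin L → ℕ :=
  fun i' j' => z i' j' - (if i' = i ∧ j' = j then 1 else 0)
    + (if i' = k ∧ j' = l then 1 else 0)

/-- Generator of the two-locus Moran model acting on `f : ℕ^{K×L} → ℝ`. -/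
noncomputable def moranGen (N K L : ℕ) (θA θB ρ : ℝ)
    (PA : Fin K → Fin K → ℝ) (PB : Fin L → Fin L → ℝ)
    (f : (Fin K → Fin L → ℕ) → ℝ) (z : Fin K → Fin L → ℕ) : ℝ :=
  ∑ i, ∑ j, ∑ k, ∑ l,
    moranRate N K L θA θB ρ PA PB z i j k l * (f (moranUpdate z i j k l) - f z)

/-- Carré du champ operator of the Moran generator:
`Γ(f,g) = G(fg) − f·G(g) − g·G(f)`. -/
noncomputable def moranCarre (N K L : ℕ) (θA θB ρ : ℝ)
    (PA : Fin K → Fin K → ℝ) (PB : Fin L → Fin L → ℝ)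
    (f g : (Fin K → Fin L → ℕ) → ℝ) (z : Fin K → Fin L → ℕ) : ℝ :=
  moranGen N K L θA θB ρ PA PB (fun z' => f z' * g z') z
    - f z * moranGen N K L θA θB ρ PA PB g z
    - g z * moranGen N K L θA θB ρ PA PB f z

/-- The marginal allele frequency `x_u(z) = z_{u·}/N`. -/
noncomputable def moranX (N : ℕ) {K L : ℕ} (z : Fin K → Fin L → ℕ) (u : Fin K) : ℝ :=
  (∑ l, (z u l : ℝ)) / N

/-- The marginal allele frequency `y_v(z) = z_{·v}/N`. -/
noncomputable def moranY (N : ℕ) {K L : ℕ} (z : Fin K → Fin L → ℕ) (v : Fin L) : ℝ :=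
  (∑ k, (z k v : ℝ)) / N

/-- The linkage-disequilibrium coordinate `d_{uv}(z)`. -/
noncomputable def moranLD (N : ℕ) {K L : ℕ} (z : Fin K → Fin L → ℕ)
    (u : Fin K) (v : Fin L) : ℝ :=
  (z u v : ℝ) / N - moranX N z u * moranY N z v

lemma moran_castsub (m s t : ℕ) (h : s ≤ m) : ((m - s + t : ℕ) : ℝ) = (m : ℝ) - s + t := by
  rw [Nat.cast_add, Nat.cast_sub h]

lemma moran_cast_abs (m s t : ℕ) : |((m - s + t : ℕ) : ℝ) - m| ≤ s + t := by
  rcases le_total s m with h | h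
  · rw [moran_castsub m s t h, abs_le]
    constructor <;> [linarith [Nat.cast_nonneg (α := ℝ) t]; linarith [Nat.cast_nonneg (α := ℝ) s]]
  · rw [Nat.sub_eq_zero_of_le h, Nat.zero_add, abs_le]
    have h' := (Nat.cast_le (α := ℝ)).2 h
    constructor
    · linarith [Nat.cast_nonneg (α := ℝ) t, Nat.cast_nonneg (α := ℝ) m]
    · linarith [Nat.cast_nonneg (α := ℝ) m]

lemma moran_sum_ind_row {K L : ℕ} (u i : Fin K) (j : Fin L) :
    ∑ l', (if u = i ∧ l' = j then (1:ℝ) else 0) = if u = i then 1 else 0 := by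
  rcases eq_or_ne u i with h | h <;> simp [h]

lemma moran_sum_ind_col {K L : ℕ} (v j : Fin L) (i : Fin K) :
    ∑ k', (if k' = i ∧ v = j then (1:ℝ) else 0) = if v = j then 1 else 0 := by
  rcases eq_or_ne v j with h | h <;> simp [h]

lemma moranX_update {N K L : ℕ} (z : Fin K → Fin L → ℕ) (i : Fin K) (j : Fin L)
    (a : Fin K) (b : Fin L) (u : Fin K) (h : 1 ≤ z i j) :
    moranX N (moranUpdate z i j a b) u - moranX N z u
      = ((if u = a then 1 else 0) - (if u = i then 1 else 0)) / N := by
  have key : ∀ l', ((moranUpdate z i j a b u l' : ℕ) : ℝ)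
      = (z u l' : ℝ) - (if u = i ∧ l' = j then (1:ℝ) else 0)
        + (if u = a ∧ l' = b then (1:ℝ) else 0) := by
    intro l'
    unfold moranUpdate
    have hle : (if u = i ∧ l' = j then 1 else 0) ≤ z u l' := by
      split_ifs with hc
      · obtain ⟨h1, h2⟩ := hc; subst h1; subst h2; exact h
      · exact Nat.zero_le _
    rw [moran_castsub _ _ _ hle]
    split_ifs <;> simp
  unfold moranX
  rw [div_sub_div_same]
  congr 1
  simp only [key, Finset.sum_add_distrib, Finset.sum_sub_distrib, moran_sum_ind_row]
  ring

lemma moranY_update {N K L : ℕ} (z : Fin K → Fin L → ℕ) (i : Fin K) (j : Fin L)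
    (a : Fin K) (b : Fin L) (v : Fin L) (h : 1 ≤ z i j) :
    moranY N (moranUpdate z i j a b) v - moranY N z v
      = ((if v = b then 1 else 0) - (if v = j then 1 else 0)) / N := by
  have key : ∀ k', ((moranUpdate z i j a b k' v : ℕ) : ℝ)
      = (z k' v : ℝ) - (if k' = i ∧ v = j then (1:ℝ) else 0)
        + (if k' = a ∧ v = b then (1:ℝ) else 0) := by
    intro k'
    unfold moranUpdate
    have hle : (if k' = i ∧ v = j then 1 else 0) ≤ z k' v := by
      split_ifs with hc
      · obtain ⟨h1, h2⟩ := hc; subst h1; subst h2; exact h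
      · exact Nat.zero_le _
    rw [moran_castsub _ _ _ hle]
    split_ifs <;> simp
  unfold moranY
  rw [div_sub_div_same]
  congr 1
  simp only [key, Finset.sum_add_distrib, Finset.sum_sub_distrib,
    moran_sum_ind_col]
  ring

lemma moranX_update_abs {N K L : ℕ} (hN : 1 ≤ N) (z : Fin K → Fin L → ℕ) (i : Fin K) (j : Fin L)
    (a : Fin K) (b : Fin L) (u : Fin K) :
    |moranX N (moranUpdate z i j a b) u - moranX N z u| ≤ 2 / N := by
  have hNpos : (0:ℝ) < N := by exact_mod_cast hN
  unfold moranX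
  rw [div_sub_div_same, abs_div, abs_of_pos hNpos, div_le_div_iff_of_pos_right hNpos]
  rw [← Finset.sum_sub_distrib]
  calc |∑ l', (((moranUpdate z i j a b u l' : ℕ) : ℝ) - (z u l' : ℝ))|
      ≤ ∑ l', |((moranUpdate z i j a b u l' : ℕ) : ℝ) - (z u l' : ℝ)| :=
        Finset.abs_sum_le_sum_abs _ _
    _ ≤ ∑ l', ((Nat.cast (if u = i ∧ l' = j then 1 else 0) : ℝ)
          + (Nat.cast (if u = a ∧ l' = b then 1 else 0) : ℝ)) := by
        refine Finset.sum_le_sum fun l' _ => ?_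
        exact moran_cast_abs (z u l') _ _
    _ ≤ 2 := by
        simp only [Finset.sum_add_distrib]
        push_cast
        rw [moran_sum_ind_row, moran_sum_ind_row]
        split_ifs <;> norm_num

lemma moranY_update_abs {N K L : ℕ} (hN : 1 ≤ N) (z : Fin K → Fin L → ℕ) (i : Fin K) (j : Fin L)
    (a : Fin K) (b : Fin L) (v : Fin L) :
    |moranY N (moranUpdate z i j a b) v - moranY N z v| ≤ 2 / N := by
  have hNpos : (0:ℝ) < N := by exact_mod_cast hN
  unfold moranY
  rw [div_sub_div_same, abs_div, abs_of_pos hNpos, div_le_div_iff_of_pos_right hNpos]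
  rw [← Finset.sum_sub_distrib]
  calc |∑ k', (((moranUpdate z i j a b k' v : ℕ) : ℝ) - (z k' v : ℝ))|
      ≤ ∑ k', |((moranUpdate z i j a b k' v : ℕ) : ℝ) - (z k' v : ℝ)| :=
        Finset.abs_sum_le_sum_abs _ _
    _ ≤ ∑ k', ((Nat.cast (if k' = i ∧ v = j then 1 else 0) : ℝ)
          + (Nat.cast (if k' = a ∧ v = b then 1 else 0) : ℝ)) := by
        refine Finset.sum_le_sum fun k' _ => ?_
        exact moran_cast_abs (z k' v) _ _
    _ ≤ 2 := by
        simp only [Finset.sum_add_distrib]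
        push_cast
        rw [moran_sum_ind_col, moran_sum_ind_col]
        split_ifs <;> norm_num

lemma carre_eq (N K L : ℕ) (θA θB ρ : ℝ) (PA : Fin K → Fin K → ℝ) (PB : Fin L → Fin L → ℝ)
    (f g : (Fin K → Fin L → ℕ) → ℝ) (z : Fin K → Fin L → ℕ) :
    moranCarre N K L θA θB ρ PA PB f g z
      = ∑ i, ∑ j, ∑ a, ∑ b, moranRate N K L θA θB ρ PA PB z i j a b *
          ((f (moranUpdate z i j a b) - f z) * (g (moranUpdate z i j a b) - g z)) := by
  simp only [moranCarre, moranGen, Finset.mul_sum, ← Finset.sum_sub_distrib]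
  refine Finset.sum_congr rfl fun i _ => Finset.sum_congr rfl fun j _ =>
    Finset.sum_congr rfl fun a _ => Finset.sum_congr rfl fun b _ => ?_
  ring

lemma quad (K L : ℕ) (p α β : Fin K → Fin L → ℝ) (hp : ∑ i, ∑ j, p i j = 1) :
    ∑ i, ∑ j, ∑ a, ∑ b, p i j * p a b * ((α a b - α i j) * (β a b - β i j))
      = 2 * ((∑ a, ∑ b, p a b * (α a b * β a b))
          - (∑ a, ∑ b, p a b * α a b) * (∑ a, ∑ b, p a b * β a b)) := by
  have expand : ∀ i j a b, p i j * p a b * ((α a b - α i j) * (β a b - β i j))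
      = p i j * (p a b * (α a b * β a b)) + (p i j * (α i j * β i j)) * p a b
        - (p i j * β i j) * (p a b * α a b) - (p i j * α i j) * (p a b * β a b) := by
    intros; ring
  simp only [expand, Finset.sum_add_distrib, Finset.sum_sub_distrib,
    ← Finset.mul_sum, ← Finset.sum_mul]
  rw [hp]
  ring

lemma moran_master (N K L : ℕ) (θA θB ρ : ℝ) (hθA : 0 ≤ θA) (hθB : 0 ≤ θB) (hρ : 0 ≤ ρ)
    (PA : Fin K → Fin K → ℝ) (PB : Fin L → Fin L → ℝ)
    (hPA : (∀ i k, 0 ≤ PA i k) ∧ ∀ i, ∑ k, PA i k = 1)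
    (hPB : (∀ j l, 0 ≤ PB j l) ∧ ∀ j, ∑ l, PB j l = 1)
    (hN : 1 ≤ N) (z : Fin K → Fin L → ℕ) (hz : ∑ i, ∑ j, z i j = N)
    (f g : (Fin K → Fin L → ℕ) → ℝ) (α β : Fin K → Fin L → ℝ)
    (hf1 : ∀ i j a b, 1 ≤ z i j →
      f (moranUpdate z i j a b) - f z = (α a b - α i j) / N)
    (hf2 : ∀ i j a b, |f (moranUpdate z i j a b) - f z| ≤ 2 / N)
    (hg1 : ∀ i j a b, 1 ≤ z i j →
      g (moranUpdate z i j a b) - g z = (β a b - β i j) / N)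
    (hg2 : ∀ i j a b, |g (moranUpdate z i j a b) - g z| ≤ 2 / N) :
    |moranCarre N K L θA θB ρ PA PB f g z
      - ((∑ a, ∑ b, (z a b : ℝ) / N * (α a b * β a b))
          - (∑ a, ∑ b, (z a b : ℝ) / N * α a b) * (∑ a, ∑ b, (z a b : ℝ) / N * β a b))|
      ≤ 2 * (K : ℝ) ^ 2 * (L : ℝ) ^ 2 * (θA + θB + ρ) / N := by
  have hNpos : (0:ℝ) < N := by exact_mod_cast hN
  have hN0 : (N:ℝ) ≠ 0 := ne_of_gt hNpos
  -- entry bounds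
  have hzle : ∀ i j, (z i j : ℝ) ≤ N := by
    intro i j
    have : z i j ≤ N := by
      calc z i j ≤ ∑ j', z i j' := Finset.single_le_sum (fun _ _ => Nat.zero_le _) (Finset.mem_univ j)
        _ ≤ ∑ i', ∑ j', z i' j' :=
          Finset.single_le_sum (f := fun i' => ∑ j', z i' j') (fun _ _ => Nat.zero_le _) (Finset.mem_univ i)
        _ = N := hz
    exact_mod_cast this
  have hrow : ∀ a, (∑ l', (z a l' : ℝ)) ≤ N := by
    intro a
    have : ∑ l', z a l' ≤ N := by
      calc ∑ l', z a l' ≤ ∑ i', ∑ j', z i' j' :=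
          Finset.single_le_sum (f := fun i' => ∑ j', z i' j') (fun _ _ => Nat.zero_le _) (Finset.mem_univ a)
        _ = N := hz
    calc (∑ l', (z a l' : ℝ)) = ((∑ l', z a l' : ℕ) : ℝ) := by push_cast; ring
      _ ≤ N := by exact_mod_cast this
  have hcol : ∀ b, (∑ k', (z k' b : ℝ)) ≤ N := by
    intro b
    have hn : ∑ k', z k' b ≤ N := by
      calc ∑ k', z k' b ≤ ∑ i', ∑ j', z i' j' := by
            rw [Finset.sum_comm]
            exact Finset.single_le_sum (f := fun j' => ∑ i', z i' j') (fun _ _ => Nat.zero_le _) (Finset.mem_univ b)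
        _ = N := hz
    calc (∑ k', (z k' b : ℝ)) = ((∑ k', z k' b : ℕ) : ℝ) := by push_cast; ring
      _ ≤ N := by exact_mod_cast hn
  have hPAle : ∀ i a, PA i a ≤ 1 := by
    intro i a
    calc PA i a ≤ ∑ a', PA i a' := Finset.single_le_sum (fun a' _ => hPA.1 i a') (Finset.mem_univ a)
      _ = 1 := hPA.2 i
  have hPBle : ∀ j b, PB j b ≤ 1 := by
    intro j b
    calc PB j b ≤ ∑ b', PB j b' := Finset.single_le_sum (fun b' _ => hPB.1 j b') (Finset.mem_univ b)
      _ = 1 := hPB.2 j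
  -- perturbation term
  set pert : Fin K → Fin L → Fin K → Fin L → ℝ := fun i j a b =>
    ((z i j : ℝ) / N) * ((N : ℝ) * (θA / 2 * PA i a * (if j = b then 1 else 0)
      + θB / 2 * PB j b * (if i = a then 1 else 0)
      + ρ / 2 * ((∑ l', (z a l' : ℝ)) / N) * ((∑ k', (z k' b : ℝ)) / N))) with hpert
  have pert_bound : ∀ i j a b, |pert i j a b| ≤ (N : ℝ) * ((θA + θB + ρ) / 2) := by
    intro i j a b
    have hq0 : (0:ℝ) ≤ (z i j : ℝ) / N := div_nonneg (Nat.cast_nonneg _) (le_of_lt hNpos)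
    have hq1 : (z i j : ℝ) / N ≤ 1 := (div_le_one hNpos).2 (hzle i j)
    have hx0 : (0:ℝ) ≤ (∑ l', (z a l' : ℝ)) / N :=
      div_nonneg (Finset.sum_nonneg fun _ _ => Nat.cast_nonneg _) (le_of_lt hNpos)
    have hx1 : (∑ l', (z a l' : ℝ)) / N ≤ 1 := (div_le_one hNpos).2 (hrow a)
    have hy0 : (0:ℝ) ≤ (∑ k', (z k' b : ℝ)) / N :=
      div_nonneg (Finset.sum_nonneg fun _ _ => Nat.cast_nonneg _) (le_of_lt hNpos)
    have hy1 : (∑ k', (z k' b : ℝ)) / N ≤ 1 := (div_le_one hNpos).2 (hcol b)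
    have hχj0 : (0:ℝ) ≤ (if j = b then (1:ℝ) else 0) := by positivity
    have hχj1 : (if j = b then (1:ℝ) else 0) ≤ 1 := by split_ifs <;> norm_num
    have hχi0 : (0:ℝ) ≤ (if i = a then (1:ℝ) else 0) := by positivity
    have hχi1 : (if i = a then (1:ℝ) else 0) ≤ 1 := by split_ifs <;> norm_num
    have hPA0 := hPA.1 i a
    have hPB0 := hPB.1 j b
    have hPA1 := hPAle i a
    have hPB1 := hPBle j b
    have hE0 : (0:ℝ) ≤ θA / 2 * PA i a * (if j = b then 1 else 0)
        + θB / 2 * PB j b * (if i = a then 1 else 0)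
        + ρ / 2 * ((∑ l', (z a l' : ℝ)) / N) * ((∑ k', (z k' b : ℝ)) / N) := by
      have : (0:ℝ) ≤ θA / 2 * PA i a * (if j = b then 1 else 0) := by positivity
      have : (0:ℝ) ≤ θB / 2 * PB j b * (if i = a then 1 else 0) := by positivity
      have : (0:ℝ) ≤ ρ / 2 * ((∑ l', (z a l' : ℝ)) / N) * ((∑ k', (z k' b : ℝ)) / N) := by positivity
      positivity
    have hE1 : θA / 2 * PA i a * (if j = b then 1 else 0)
        + θB / 2 * PB j b * (if i = a then 1 else 0)
        + ρ / 2 * ((∑ l', (z a l' : ℝ)) / N) * ((∑ k', (z k' b : ℝ)) / N)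
        ≤ (θA + θB + ρ) / 2 := by
      have h1 : θA / 2 * PA i a * (if j = b then 1 else 0) ≤ θA / 2 := by
        have := mul_le_mul (mul_le_mul_of_nonneg_left hPA1 (by positivity : (0:ℝ) ≤ θA/2))
          hχj1 hχj0 (by positivity : (0:ℝ) ≤ θA/2 * 1)
        simpa using this
      have h2 : θB / 2 * PB j b * (if i = a then 1 else 0) ≤ θB / 2 := by
        have := mul_le_mul (mul_le_mul_of_nonneg_left hPB1 (by positivity : (0:ℝ) ≤ θB/2))
          hχi1 hχi0 (by positivity : (0:ℝ) ≤ θB/2 * 1)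
        simpa using this
      have h3 : ρ / 2 * ((∑ l', (z a l' : ℝ)) / N) * ((∑ k', (z k' b : ℝ)) / N) ≤ ρ / 2 := by
        have := mul_le_mul (mul_le_mul_of_nonneg_left hx1 (by positivity : (0:ℝ) ≤ ρ/2))
          hy1 hy0 (by positivity : (0:ℝ) ≤ ρ/2 * 1)
        simpa using this
      linarith
    rw [hpert]
    rw [abs_of_nonneg (by positivity)]
    calc ((z i j : ℝ) / N) * ((N : ℝ) * _) ≤ 1 * ((N : ℝ) * ((θA + θB + ρ) / 2)) := by
          apply mul_le_mul hq1 _ (by positivity) (by norm_num)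
          exact mul_le_mul_of_nonneg_left hE1 (le_of_lt hNpos)
      _ = (N : ℝ) * ((θA + θB + ρ) / 2) := by ring
  -- probability normalization
  have hp : ∑ i, ∑ j, (z i j : ℝ) / N = 1 := by
    simp only [← Finset.sum_div]
    rw [show (∑ i, ∑ j, ((z i j : ℕ) : ℝ)) = (N : ℝ) by exact_mod_cast hz]
    exact div_self hN0
  -- per-term split
  have split : ∀ i j a b, moranRate N K L θA θB ρ PA PB z i j a b *
      ((f (moranUpdate z i j a b) - f z) * (g (moranUpdate z i j a b) - g z))
    = (1/2) * (((z i j : ℝ)/N) * ((z a b : ℝ)/N) * ((α a b - α i j) * (β a b - β i j)))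
      + pert i j a b * ((f (moranUpdate z i j a b) - f z) * (g (moranUpdate z i j a b) - g z)) := by
    intro i j a b
    rcases Nat.eq_zero_or_pos (z i j) with h0 | h1
    · simp [moranRate, hpert, h0]
    · rw [hf1 i j a b h1, hg1 i j a b h1]
      have hc : ((z i j : ℝ)/N) * ((N:ℝ)^2/2 * ((z a b : ℝ)/N))
            * ((α a b - α i j)/N * ((β a b - β i j)/N))
          = 1/2 * (((z i j : ℝ)/N) * ((z a b : ℝ)/N)
            * ((α a b - α i j) * (β a b - β i j))) := by
        field_simp
      simp only [hpert, moranRate]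
      rw [← hc]
      ring
  have main_eq : ∑ i, ∑ j, ∑ a, ∑ b,
      (1/2) * (((z i j : ℝ)/N) * ((z a b : ℝ)/N) * ((α a b - α i j) * (β a b - β i j)))
    = (∑ a, ∑ b, (z a b : ℝ) / N * (α a b * β a b))
      - (∑ a, ∑ b, (z a b : ℝ) / N * α a b) * (∑ a, ∑ b, (z a b : ℝ) / N * β a b) := by
    simp only [← Finset.mul_sum]
    rw [quad K L (fun a b => (z a b : ℝ)/N) α β hp]
    ring
  have decomp : moranCarre N K L θA θB ρ PA PB f g z
      - ((∑ a, ∑ b, (z a b : ℝ) / N * (α a b * β a b))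
          - (∑ a, ∑ b, (z a b : ℝ) / N * α a b) * (∑ a, ∑ b, (z a b : ℝ) / N * β a b))
      = ∑ i, ∑ j, ∑ a, ∑ b, pert i j a b *
          ((f (moranUpdate z i j a b) - f z) * (g (moranUpdate z i j a b) - g z)) := by
    rw [carre_eq]
    simp only [split, Finset.sum_add_distrib]
    rw [main_eq]
    ring
  rw [decomp]
  have hB : (0:ℝ) ≤ (N : ℝ) * ((θA + θB + ρ) / 2) := by positivity
  calc |∑ i, ∑ j, ∑ a, ∑ b, pert i j a b *
          ((f (moranUpdate z i j a b) - f z) * (g (moranUpdate z i j a b) - g z))|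
      ≤ ∑ i, ∑ j, ∑ a, ∑ b, |pert i j a b *
          ((f (moranUpdate z i j a b) - f z) * (g (moranUpdate z i j a b) - g z))| := by
        refine (Finset.abs_sum_le_sum_abs _ _).trans (Finset.sum_le_sum fun i _ => ?_)
        refine (Finset.abs_sum_le_sum_abs _ _).trans (Finset.sum_le_sum fun j _ => ?_)
        refine (Finset.abs_sum_le_sum_abs _ _).trans (Finset.sum_le_sum fun a _ => ?_)
        exact Finset.abs_sum_le_sum_abs _ _
    _ ≤ ∑ i : Fin K, ∑ j : Fin L, ∑ a : Fin K, ∑ b : Fin L,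
          ((N : ℝ) * ((θA + θB + ρ) / 2)) * ((2/(N:ℝ)) * (2/(N:ℝ))) := by
        refine Finset.sum_le_sum fun i _ => Finset.sum_le_sum fun j _ =>
          Finset.sum_le_sum fun a _ => Finset.sum_le_sum fun b _ => ?_
        rw [abs_mul]
        have hΔ : |(f (moranUpdate z i j a b) - f z) * (g (moranUpdate z i j a b) - g z)|
            ≤ (2/(N:ℝ)) * (2/(N:ℝ)) := by
          rw [abs_mul]
          exact mul_le_mul (hf2 i j a b) (hg2 i j a b) (abs_nonneg _) (by positivity)
        exact mul_le_mul (pert_bound i j a b) hΔ (abs_nonneg _) hB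
    _ = 2 * (K : ℝ) ^ 2 * (L : ℝ) ^ 2 * (θA + θB + ρ) / N := by
        simp only [Finset.sum_const, Finset.card_univ, Fintype.card_fin, nsmul_eq_mul]
        field_simp

lemma moran_sumX (N K L : ℕ) (z : Fin K → Fin L → ℕ) (u : Fin K) :
    ∑ a, ∑ b, (z a b : ℝ) / N * (if u = a then 1 else 0) = moranX N z u := by
  have h : ∀ a : Fin K, ∑ b, (z a b : ℝ) / N * (if u = a then 1 else 0)
      = if u = a then (∑ b, (z a b : ℝ)) / N else 0 := by
    intro a
    split_ifs with hc
    · simp [Finset.sum_div]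
    · simp
  simp only [h, Finset.sum_ite_eq, Finset.mem_univ, if_true]
  rfl

lemma moran_sumY (N K L : ℕ) (z : Fin K → Fin L → ℕ) (v : Fin L) :
    ∑ a, ∑ b, (z a b : ℝ) / N * (if v = b then 1 else 0) = moranY N z v := by
  have h : ∀ a : Fin K, ∑ b, (z a b : ℝ) / N * (if v = b then 1 else 0)
      = (z a v : ℝ) / N := by
    intro a
    simp [mul_ite, Finset.sum_ite_eq]
  simp only [h, ← Finset.sum_div]
  rfl

lemma moran_sumXX (N K L : ℕ) (z : Fin K → Fin L → ℕ) (u k : Fin K) :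
    ∑ a, ∑ b, (z a b : ℝ) / N * ((if u = a then 1 else 0) * (if k = a then 1 else 0))
      = (if u = k then 1 else 0) * moranX N z u := by
  have key : ∀ a : Fin K, (if u = a then (1:ℝ) else 0) * (if k = a then 1 else 0)
      = (if u = k then 1 else 0) * (if u = a then 1 else 0) := by
    intro a; split_ifs <;> simp_all
  simp only [key]
  have h : ∀ a : Fin K, ∀ b : Fin L, (z a b : ℝ) / N *
      ((if u = k then (1:ℝ) else 0) * (if u = a then 1 else 0))
      = (if u = k then (1:ℝ) else 0) * ((z a b : ℝ) / N * (if u = a then 1 else 0)) := by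
    intros; ring
  simp only [h, ← Finset.mul_sum]
  rw [moran_sumX]

lemma moran_sumYY (N K L : ℕ) (z : Fin K → Fin L → ℕ) (v l : Fin L) :
    ∑ a, ∑ b, (z a b : ℝ) / N * ((if v = b then 1 else 0) * (if l = b then 1 else 0))
      = (if v = l then 1 else 0) * moranY N z v := by
  have key : ∀ b : Fin L, (if v = b then (1:ℝ) else 0) * (if l = b then 1 else 0)
      = (if v = l then 1 else 0) * (if v = b then 1 else 0) := by
    intro b; split_ifs <;> simp_all
  simp only [key]
  have h : ∀ a : Fin K, ∀ b : Fin L, (z a b : ℝ) / N *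
      ((if v = l then (1:ℝ) else 0) * (if v = b then 1 else 0))
      = (if v = l then (1:ℝ) else 0) * ((z a b : ℝ) / N * (if v = b then 1 else 0)) := by
    intros; ring
  simp only [h, ← Finset.mul_sum]
  rw [moran_sumY]

lemma moran_sumXY (N K L : ℕ) (z : Fin K → Fin L → ℕ) (u : Fin K) (v : Fin L) :
    ∑ a, ∑ b, (z a b : ℝ) / N * ((if u = a then 1 else 0) * (if v = b then 1 else 0))
      = (z u v : ℝ) / N := by
  have h : ∀ a : Fin K, ∑ b, (z a b : ℝ) / N *
      ((if u = a then (1:ℝ) else 0) * (if v = b then 1 else 0))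
      = if u = a then (z a v : ℝ) / N else 0 := by
    intro a
    split_ifs with hc
    · simp [mul_ite, Finset.sum_ite_eq]
    · simp
  simp only [h, Finset.sum_ite_eq, Finset.mem_univ, if_true]

/-- The carré du champ of the marginal allele frequencies reproduces the
Wright–Fisher diffusion matrix up to an error of order `(1 + θ_A + θ_B + ρ)/N`,
with constant depending only on `K` and `L`. -/
theorem moranCarre_marginals (K L : ℕ) (hK : 1 ≤ K) (hL : 1 ≤ L) :
    ∃ C : ℝ, 0 < C ∧
      ∀ (θA θB ρ : ℝ), 0 ≤ θA → 0 ≤ θB → 0 ≤ ρ →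
      ∀ (PA : Fin K → Fin K → ℝ) (PB : Fin L → Fin L → ℝ),
        ((∀ i k, 0 ≤ PA i k) ∧ ∀ i, ∑ k, PA i k = 1) →
        ((∀ j l, 0 ≤ PB j l) ∧ ∀ j, ∑ l, PB j l = 1) →
      ∀ N : ℕ, 1 ≤ N →
      ∀ z : Fin K → Fin L → ℕ, ∑ i, ∑ j, z i j = N →
      ∀ (u k : Fin K) (v l : Fin L),
        |moranCarre N K L θA θB ρ PA PB
              (fun z' => moranX N z' u) (fun z' => moranX N z' k) z
            - moranX N z u * ((if u = k then 1 else 0) - moranX N z k)|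
          ≤ C * (1 + θA + θB + ρ) / N ∧
        |moranCarre N K L θA θB ρ PA PB
              (fun z' => moranY N z' v) (fun z' => moranY N z' l) z
            - moranY N z v * ((if v = l then 1 else 0) - moranY N z l)|
          ≤ C * (1 + θA + θB + ρ) / N ∧
        |moranCarre N K L θA θB ρ PA PB
              (fun z' => moranX N z' u) (fun z' => moranY N z' v) z
            - moranLD N z u v|
          ≤ C * (1 + θA + θB + ρ) / N := by
  have hKpos : (0:ℝ) < K := by exact_mod_cast hK
  have hLpos : (0:ℝ) < L := by exact_mod_cast hL
  refine ⟨2 * (K:ℝ)^2 * (L:ℝ)^2, by positivity, ?_⟩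
  intro θA θB ρ hθA hθB hρ PA PB hPA hPB N hN z hz u k v l
  have hfinal : 2 * (K:ℝ)^2 * (L:ℝ)^2 * (θA + θB + ρ) / N
      ≤ 2 * (K:ℝ)^2 * (L:ℝ)^2 * (1 + θA + θB + ρ) / N := by
    gcongr
    linarith
  refine ⟨?_, ?_, ?_⟩
  · have hm := moran_master N K L θA θB ρ hθA hθB hρ PA PB hPA hPB hN z hz
      (fun z' => moranX N z' u) (fun z' => moranX N z' k)
      (fun r _ => if u = r then 1 else 0) (fun r _ => if k = r then 1 else 0)
      (fun i j a b h => moranX_update z i j a b u h)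
      (fun i j a b => moranX_update_abs hN z i j a b u)
      (fun i j a b h => moranX_update z i j a b k h)
      (fun i j a b => moranX_update_abs hN z i j a b k)
    rw [moran_sumXX, moran_sumX, moran_sumX] at hm
    have ht : (if u = k then (1:ℝ) else 0) * moranX N z u
        - moranX N z u * moranX N z k
        = moranX N z u * ((if u = k then 1 else 0) - moranX N z k) := by ring
    rw [ht] at hm
    exact hm.trans hfinal
  · have hm := moran_master N K L θA θB ρ hθA hθB hρ PA PB hPA hPB hN z hz
      (fun z' => moranY N z' v) (fun z' => moranY N z' l)
      (fun _ c => if v = c then 1 else 0) (fun _ c => if l = c then 1 else 0)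
      (fun i j a b h => moranY_update z i j a b v h)
      (fun i j a b => moranY_update_abs hN z i j a b v)
      (fun i j a b h => moranY_update z i j a b l h)
      (fun i j a b => moranY_update_abs hN z i j a b l)
    rw [moran_sumYY, moran_sumY, moran_sumY] at hm
    have ht : (if v = l then (1:ℝ) else 0) * moranY N z v
        - moranY N z v * moranY N z l
        = moranY N z v * ((if v = l then 1 else 0) - moranY N z l) := by ring
    rw [ht] at hm
    exact hm.trans hfinal
  · have hm := moran_master N K L θA θB ρ hθA hθB hρ PA PB hPA hPB hN z hz
      (fun z' => moranX N z' u) (fun z' => moranY N z' v)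
      (fun r _ => if u = r then 1 else 0) (fun _ c => if v = c then 1 else 0)
      (fun i j a b h => moranX_update z i j a b u h)
      (fun i j a b => moranX_update_abs hN z i j a b u)
      (fun i j a b h => moranY_update z i j a b v h)
      (fun i j a b => moranY_update_abs hN z i j a b v)
    rw [moran_sumXY, moran_sumX, moran_sumY] at hm
    have ht : (z u v : ℝ) / N - moranX N z u * moranY N z v = moranLD N z u v := rfl
    rw [ht] at hm
    exact hm.trans hfinal
end

section
/- Let K, L ≥ 1, let q^A : ℕ^K → ℝ and q^B : ℕ^L → ℝ be arbitrary bounded functions, and fix a sample configuration (a,b,c) with c ≥ 2. For ρ > 0 set α = binom(c,2)/ρ and define A = Σ_{i=1}^K Σ_{j=1}^L [binom(c_{ij},2)/binom(c,2)] q^A(a+c_A−e_i) q^B(b+c_B−e_j), B = Σ_{i=1}^K [binom(c_{i·},2)/binom(c,2)] q^A(a+c_A−e_i) q^B(b+c_B), C' = Σ_{j=1}^L [binom(c_{·j},2)/binom(c,2)] q^A(a+c_A) q^B(b+c_B−e_j), and q_0 = q^A(a+c_A) q^B(b+c_B). Then there exists a constant C > 0 such that for all ρ ≥ 1: | α·A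 + (1−α)(1+2α)[q_0 − α·B − α·C'] − q_0 − q_1/ρ | ≤ C/ρ², where q_1 = binom(c,2) q^A(a+c_A) q^B(b+c_B) − q^B(b+c_B) Σ_{i=1}^K binom(c_{i·},2) q^A(a+c_A−e_i) − q^A(a+c_A) Σ_{j=1}^L binom(c_{·j},2) q^B(b+c_B−e_j) + Σ_{i=1}^K Σ_{j=1}^L binom(c_{ij},2) q^A(a+c_A−e_i) q^B(b+c_B−e_j). -/
open scoped BigOperators

/-- `q^A(a + c_A − e_i)` : the first-locus moment function evaluated at the marginal
configuration with one haplotype of first-locus allele `i` removed. -/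
noncomputable def qAm {K L : ℕ} (qA : (Fin K → ℕ) → ℝ)
    (a : Fin K → ℕ) (c : Fin K → Fin L → ℕ) (i : Fin K) : ℝ :=
  qA (fun i' => a i' + ∑ j', c i' j' - if i' = i then 1 else 0)

/-- `q^B(b + c_B − e_j)`. -/
noncomputable def qBm {K L : ℕ} (qB : (Fin L → ℕ) → ℝ)
    (b : Fin L → ℕ) (c : Fin K → Fin L → ℕ) (j : Fin L) : ℝ :=
  qB (fun j' => b j' + ∑ i', c i' j' - if j' = j then 1 else 0)

/-- `q^A(a + c_A)`. -/
noncomputable def qA0 {K L : ℕ} (qA : (Fin K → ℕ) → ℝ)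
    (a : Fin K → ℕ) (c : Fin K → Fin L → ℕ) : ℝ :=
  qA (fun i => a i + ∑ j, c i j)

/-- `q^B(b + c_B)`. -/
noncomputable def qB0 {K L : ℕ} (qB : (Fin L → ℕ) → ℝ)
    (b : Fin L → ℕ) (c : Fin K → Fin L → ℕ) : ℝ :=
  qB (fun j => b j + ∑ i, c i j)

/-- The first-order coefficient `q₁(a,b,c)` of the asymptotic sampling formula. -/
noncomputable def q1expr {K L : ℕ} (qA : (Fin K → ℕ) → ℝ) (qB : (Fin L → ℕ) → ℝ)
    (a : Fin K → ℕ) (b : Fin L → ℕ) (c : Fin K → Fin L → ℕ) : ℝ :=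
  ((∑ i, ∑ j, c i j).choose 2 : ℝ) * qA0 qA a c * qB0 qB b c
    - qB0 qB b c * ∑ i, ((∑ j, c i j).choose 2 : ℝ) * qAm qA a c i
    - qA0 qA a c * ∑ j, ((∑ i, c i j).choose 2 : ℝ) * qBm qB b c j
    + ∑ i, ∑ j, ((c i j).choose 2 : ℝ) * qAm qA a c i * qBm qB b c j

lemma coupling_key (n ρ SA SB SC q0 : ℝ) (hn : n ≠ 0) (hρ : ρ ≠ 0) :
    (n / ρ) * (SA / n)
        + (1 - n / ρ) * (1 + 2 * (n / ρ)) * (q0 - (n / ρ) * (SB / n) - (n / ρ) * (SC / n))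
        - q0 - (n * q0 - SB - SC + SA) / ρ
      = (-(2 * n ^ 2 * q0) - n * (SB + SC)) / ρ ^ 2 + (2 * n ^ 2 * (SB + SC)) / ρ ^ 3 := by
  field_simp
  ring

set_option maxHeartbeats 1000000 in
/-- Assembly step of the coalescent coupling proof: the mixture
`α·A + (1−α)(1+2α)[q₀ − α·B − α·C']` agrees with `q₀ + q₁/ρ` up to `O(ρ⁻²)`. -/
theorem coupling_assembly (K L : ℕ) (hK : 1 ≤ K) (hL : 1 ≤ L)
    (qA : (Fin K → ℕ) → ℝ) (qB : (Fin L → ℕ) → ℝ)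
    (MA MB : ℝ) (hqA : ∀ m, |qA m| ≤ MA) (hqB : ∀ m, |qB m| ≤ MB)
    (a : Fin K → ℕ) (b : Fin L → ℕ) (c : Fin K → Fin L → ℕ)
    (hc : 2 ≤ ∑ i, ∑ j, c i j) :
    ∃ C : ℝ, 0 < C ∧ ∀ ρ : ℝ, 1 ≤ ρ →
      |(((∑ i, ∑ j, c i j).choose 2 : ℝ) / ρ) *
          (∑ i, ∑ j, (((c i j).choose 2 : ℝ) / ((∑ i', ∑ j', c i' j').choose 2 : ℝ)) *
            qAm qA a c i * qBm qB b c j)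
        + (1 - ((∑ i, ∑ j, c i j).choose 2 : ℝ) / ρ) *
            (1 + 2 * (((∑ i, ∑ j, c i j).choose 2 : ℝ) / ρ)) *
            (qA0 qA a c * qB0 qB b c
              - (((∑ i, ∑ j, c i j).choose 2 : ℝ) / ρ) *
                  (∑ i, (((∑ j, c i j).choose 2 : ℝ) / ((∑ i', ∑ j', c i' j').choose 2 : ℝ)) *
                    qAm qA a c i * qB0 qB b c)
              - (((∑ i, ∑ j, c i j).choose 2 : ℝ) / ρ) *
                  (∑ j, (((∑ i, c i j).choose 2 : ℝ) / ((∑ i', ∑ j', c i' j').choose 2 : ℝ)) *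
                    qA0 qA a c * qBm qB b c j))
        - qA0 qA a c * qB0 qB b c - q1expr qA qB a b c / ρ| ≤ C / ρ ^ 2 := by
  set n : ℝ := ((∑ i, ∑ j, c i j).choose 2 : ℝ) with hn
  have hnpos : 0 < n := by
    have h := Nat.choose_pos hc
    rw [hn]
    exact_mod_cast h
  have hnne : n ≠ 0 := ne_of_gt hnpos
  set SA : ℝ := ∑ i, ∑ j, ((c i j).choose 2 : ℝ) * qAm qA a c i * qBm qB b c j with hSA
  set SB : ℝ := ∑ i, ((∑ j, c i j).choose 2 : ℝ) * qAm qA a c i * qB0 qB b c with hSB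
  set SC : ℝ := ∑ j, ((∑ i, c i j).choose 2 : ℝ) * qA0 qA a c * qBm qB b c j with hSC
  set q0 : ℝ := qA0 qA a c * qB0 qB b c with hq0
  have hA : (∑ i, ∑ j, (((c i j).choose 2 : ℝ) / n) * qAm qA a c i * qBm qB b c j)
      = SA / n := by
    rw [hSA, Finset.sum_div]
    refine Finset.sum_congr rfl fun i _ => ?_
    rw [Finset.sum_div]
    exact Finset.sum_congr rfl fun j _ => by ring
  have hB : (∑ i, (((∑ j, c i j).choose 2 : ℝ) / n) * qAm qA a c i * qB0 qB b c)
      = SB / n := by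
    rw [hSB, Finset.sum_div]
    exact Finset.sum_congr rfl fun i _ => by ring
  have hC : (∑ j, (((∑ i, c i j).choose 2 : ℝ) / n) * qA0 qA a c * qBm qB b c j)
      = SC / n := by
    rw [hSC, Finset.sum_div]
    exact Finset.sum_congr rfl fun j _ => by ring
  have hq1 : q1expr qA qB a b c = n * q0 - SB - SC + SA := by
    rw [q1expr, hq0, hSA, hSB, hSC, hn]
    rw [Finset.mul_sum, Finset.mul_sum]
    congr 2
    · congr 1
      · ring
      · exact Finset.sum_congr rfl fun i _ => by ring
    · exact Finset.sum_congr rfl fun j _ => by ring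
  clear hn hSA hSB hSC hq0
  clear_value n SA SB SC q0
  refine ⟨(2 * n ^ 2 * |q0| + n * (|SB| + |SC|)) + 2 * n ^ 2 * (|SB| + |SC|) + 1,
    by positivity, fun ρ hρ => ?_⟩
  have hρpos : 0 < ρ := lt_of_lt_of_le one_pos hρ
  have hρne : ρ ≠ 0 := ne_of_gt hρpos
  rw [hA, hB, hC, hq1, coupling_key n ρ SA SB SC q0 hnne hρne]
  have h1 : |(-(2 * n ^ 2 * q0) - n * (SB + SC)) / ρ ^ 2|
      ≤ (2 * n ^ 2 * |q0| + n * (|SB| + |SC|)) / ρ ^ 2 := by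
    rw [abs_div, abs_of_pos (by positivity : (0:ℝ) < ρ ^ 2)]
    apply div_le_div_of_nonneg_right ?_ (by positivity)
    calc |(-(2 * n ^ 2 * q0) - n * (SB + SC))|
        ≤ |(-(2 * n ^ 2 * q0))| + |n * (SB + SC)| := abs_sub _ _
      _ = 2 * n ^ 2 * |q0| + n * |SB + SC| := by
          have e2 : |n| = n := abs_of_pos hnpos
          rw [abs_neg, abs_mul, abs_mul, abs_mul, abs_pow, e2]
          norm_num
      _ ≤ 2 * n ^ 2 * |q0| + n * (|SB| + |SC|) := by
          gcongr
          exact abs_add_le _ _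
  have h2 : |(2 * n ^ 2 * (SB + SC)) / ρ ^ 3| ≤ 2 * n ^ 2 * (|SB| + |SC|) / ρ ^ 2 := by
    rw [abs_div, abs_of_pos (by positivity : (0:ℝ) < ρ ^ 3)]
    have hnum : |2 * n ^ 2 * (SB + SC)| ≤ 2 * n ^ 2 * (|SB| + |SC|) := by
      rw [abs_mul, abs_of_pos (by positivity : (0:ℝ) < 2 * n ^ 2)]
      gcongr
      exact abs_add_le _ _
    apply div_le_div₀ (by positivity) hnum (by positivity)
    exact pow_le_pow_right₀ hρ (by norm_num)
  calc |(-(2 * n ^ 2 * q0) - n * (SB + SC)) / ρ ^ 2 + (2 * n ^ 2 * (SB + SC)) / ρ ^ 3|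
      ≤ |(-(2 * n ^ 2 * q0) - n * (SB + SC)) / ρ ^ 2|
        + |(2 * n ^ 2 * (SB + SC)) / ρ ^ 3| := abs_add_le _ _
    _ ≤ (2 * n ^ 2 * |q0| + n * (|SB| + |SC|)) / ρ ^ 2
        + 2 * n ^ 2 * (|SB| + |SC|) / ρ ^ 2 := add_le_add h1 h2
    _ ≤ ((2 * n ^ 2 * |q0| + n * (|SB| + |SC|)) + 2 * n ^ 2 * (|SB| + |SC|) + 1) / ρ ^ 2 := by
        rw [← add_div]
        apply div_le_div_of_nonneg_right ?_ (by positivity)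
        linarith
end
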